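/- Let H̃ : ℂ² → ℂ be analytic near (0,0) with H̃(0,0)=0, ∂H̃/∂s(0,0)=0 and ∂H̃/∂θ(0,0)≠0. If for all (θ,s) near (0,0) with θ real and H̃(θ,s)=0 one has s real, then a contradiction follows; i.e., no such H̃ exists. -/

import Mathlib

open Real Set Complex Filter


lemma aux_exists_sin_ge (α : ℝ) : ∃ t ∈ Set.Ioo (0:ℝ) (2*π), 1/2 ≤ Real.sin (t + α) := by
  have h2π : (0:ℝ) < 2*π := by positivity
  set t0 : ℝ := toIcoMod h2π 0 (π/2 - α) with ht0def
  have hmem : t0 ∈ Set.Ico (0:ℝ) (2*π) := toIcoMod_mem_Ico' h2π _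
  have hz : π/2 - α - toIcoDiv h2π 0 (π/2 - α) • (2*π) = t0 :=
    self_sub_toIcoDiv_zsmul h2π 0 (π/2 - α)
  set z : ℤ := toIcoDiv h2π 0 (π/2 - α)
  have hsin : Real.sin (t0 + α) = 1 := by
    have : t0 + α = π/2 - z * (2*π) := by
      rw [← hz]; push_cast [zsmul_eq_mul]; ring
    rw [this, Real.sin_sub_int_mul_two_pi, Real.sin_pi_div_two]
  by_cases h0 : t0 = 0
  · refine ⟨π/3, ⟨by positivity, by nlinarith [Real.pi_pos]⟩, ?_⟩
    have hα : α = π/2 - z * (2*π) - t0 := by rw [← hz]; push_cast [zsmul_eq_mul]; ring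
    rw [hα, h0]
    have : π/3 + (π/2 - z*(2*π) - 0) = π/3 + π/2 - z * (2*π) := by ring
    rw [this, Real.sin_sub_int_mul_two_pi, Real.sin_add_pi_div_two, Real.cos_pi_div_three]
  · exact ⟨t0, ⟨lt_of_le_of_ne hmem.1 (Ne.symm h0), hmem.2⟩, by rw [hsin]; norm_num⟩

lemma aux_exists_sin_le (α : ℝ) : ∃ t ∈ Set.Ioo (0:ℝ) (2*π), Real.sin (t + α) ≤ -(1/2) := by
  obtain ⟨t, ht, hs⟩ := aux_exists_sin_ge (α + π)
  refine ⟨t, ht, ?_⟩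
  have : t + (α + π) = t + α + π := by ring
  rw [this, Real.sin_add_pi] at hs
  linarith

lemma aux_core (g : ℂ → ℂ) (hg : AnalyticAt ℂ g 0) (hg0 : g 0 = 0)
    (hg' : deriv g 0 = 0)
    (hr : ∀ᶠ s in nhds (0:ℂ), (g s).im = 0 → s.im = 0) : False := by
  by_cases htop : analyticOrderAt g 0 = ⊤
  · rw [analyticOrderAt_eq_top] at htop
    obtain ⟨ε, hε, hball⟩ := Metric.eventually_nhds_iff.mp (htop.and hr)
    have hd : dist (((ε/2 : ℝ) : ℂ) * Complex.I) 0 < ε := by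
      rw [dist_zero_right, norm_mul, Complex.norm_I, mul_one, Complex.norm_real,
        Real.norm_eq_abs, abs_of_pos (by positivity)]
      linarith
    obtain ⟨hz, him⟩ := hball hd
    have : (((ε/2 : ℝ) : ℂ) * Complex.I).im = 0 := him (by rw [hz]; rfl)
    simp at this
    linarith
  · obtain ⟨n, hn⟩ : ∃ n : ℕ, analyticOrderAt g 0 = n := by
      cases h : analyticOrderAt g 0 with
      | top => exact absurd h htop
      | coe n => exact ⟨n, rfl⟩
    obtain ⟨u, hu, hu0, hueq⟩ := (hg.analyticOrderAt_eq_natCast).mp hn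
    simp only [sub_zero] at hueq
    -- n ≠ 0
    have hn0 : n ≠ 0 := by
      intro h; subst h
      have := hueq.self_of_nhds
      simp [hg0] at this
      exact hu0 this.symm
    -- n ≠ 1
    have hn1 : n ≠ 1 := by
      intro h; subst h
      have hder : HasDerivAt (fun z : ℂ => z ^ 1 • u z) (u 0) 0 := by
        simp only [pow_one, smul_eq_mul]
        have := (hasDerivAt_id (0:ℂ)).mul (hu.differentiableAt.hasDerivAt)
        simpa [Pi.mul_def] using this
      have : deriv g 0 = u 0 := by
        rw [Filter.EventuallyEq.deriv_eq hueq]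
        exact hder.deriv
      rw [hg'] at this
      exact hu0 this.symm
    have hn2 : 2 ≤ n := by omega
    set a : ℂ := u 0 with ha
    have hane : a ≠ 0 := hu0
    have habs : (0:ℝ) < ‖a‖ := norm_pos_iff.mpr hane
    -- angles
    obtain ⟨tp, htp, hsp⟩ := aux_exists_sin_ge a.arg
    obtain ⟨tm, htm, hsm⟩ := aux_exists_sin_le a.arg
    -- eventual facts
    have hcont : ∀ᶠ z in nhds (0:ℂ), ContinuousAt u z :=
      hu.eventually_analyticAt.mono fun z h => h.continuousAt
    have hclose : ∀ᶠ z in nhds (0:ℂ), dist (u z) a < ‖a‖ / 4 := by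
      have := hu.continuousAt
      rw [Metric.continuousAt_iff'] at this
      exact this _ (by positivity)
    obtain ⟨ε, hε, hball⟩ := Metric.eventually_nhds_iff.mp
      (hueq.and (hcont.and (hclose.and hr)))
    set r : ℝ := ε/2 with hrdef
    have hrpos : (0:ℝ) < r := by positivity
    have hrε : r < ε := by simp [hrdef]; linarith
    -- points on circle of radius r are in the ball
    have hcirc : ∀ θ : ℝ, dist ((r:ℂ) * Complex.exp (θ * Complex.I)) 0 < ε := by
      intro θ
      rw [dist_zero_right]
      calc ‖(r:ℂ) * Complex.exp (θ * Complex.I)‖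
          = r := by
            rw [norm_mul]
            simp [Complex.norm_exp_ofReal_mul_I, abs_of_pos hrpos]
        _ < ε := hrε
    set c : ℝ → ℝ := fun θ =>
      (Complex.exp (θ * Complex.I) ^ n * u ((r:ℂ) * Complex.exp (θ * Complex.I))).im with hcdef
    -- continuity of c
    have hccont : ContinuousOn c (Set.uIcc (tp/n) (tm/n)) := by
      intro θ _
      apply ContinuousAt.continuousWithinAt
      have h1 : ContinuousAt (fun θ : ℝ => (r:ℂ) * Complex.exp (θ * Complex.I)) θ := by
        fun_prop
      have h2 : ContinuousAt u ((r:ℂ) * Complex.exp (θ * Complex.I)) :=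
        (hball (hcirc θ)).2.1
      have h3 : ContinuousAt (fun θ : ℝ => Complex.exp (θ * Complex.I) ^ n) θ := by
        fun_prop
      have h4 : ContinuousAt (u ∘ fun θ : ℝ => (r:ℂ) * Complex.exp (θ * Complex.I)) θ :=
        ContinuousAt.comp h2 h1
      have h6 : ContinuousAt (fun θ : ℝ => Complex.exp (θ * Complex.I) ^ n *
          u ((r:ℂ) * Complex.exp (θ * Complex.I))) θ := h3.mul h4
      exact ContinuousAt.comp (Complex.continuous_im.continuousAt) h6
    -- value estimates
    have hval : ∀ t : ℝ, c (t/n) = (Complex.exp (t * Complex.I) *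
        u ((r:ℂ) * Complex.exp ((t/n : ℝ) * Complex.I))).im := by
      intro t
      have : Complex.exp (((t/n : ℝ) : ℂ) * Complex.I) ^ n = Complex.exp (t * Complex.I) := by
        rw [← Complex.exp_nat_mul]
        congr 1
        have hnc : (n:ℂ) ≠ 0 := Nat.cast_ne_zero.mpr hn0
        push_cast
        field_simp
      rw [hcdef]
      simp only []
      rw [this]
    have hkey : ∀ t : ℝ, dist (u ((r:ℂ) * Complex.exp ((t/n : ℝ) * Complex.I))) a
        < ‖a‖ / 4 := fun t => (hball (hcirc _)).2.2.1
    have him_eq : ∀ (t : ℝ) (w : ℂ), (Complex.exp (t * Complex.I) * w).im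
        = ‖a‖ * Real.sin (t + a.arg)
          + (Complex.exp (t * Complex.I) * (w - a)).im := by
      intro t w
      have hw : w = a + (w - a) := by ring
      nth_rewrite 1 [hw]
      rw [mul_add, Complex.add_im]
      congr 1
      conv_lhs => rw [← Complex.norm_mul_exp_arg_mul_I a]
      have h5 : Complex.exp ((t:ℂ) * Complex.I) *
            ((‖a‖ : ℂ) * Complex.exp ((a.arg : ℂ) * Complex.I))
          = (‖a‖ : ℂ) * Complex.exp (((t + a.arg : ℝ) : ℂ) * Complex.I) := by
        rw [Complex.ofReal_add, add_mul, Complex.exp_add]; ring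
      rw [h5, Complex.mul_im]
      simp only [Complex.exp_ofReal_mul_I_im, Complex.ofReal_re, Complex.ofReal_im,
        zero_mul, add_zero, mul_zero]
    have herr : ∀ (t : ℝ) (w : ℂ), dist w a < ‖a‖ / 4 →
        |(Complex.exp (t * Complex.I) * (w - a)).im| ≤ ‖a‖ / 4 := by
      intro t w hw
      calc |(Complex.exp (t * Complex.I) * (w - a)).im|
          ≤ ‖Complex.exp (t * Complex.I) * (w - a)‖ := Complex.abs_im_le_norm _
        _ = ‖w - a‖ := by
            rw [norm_mul, Complex.norm_exp_ofReal_mul_I, one_mul]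
        _ ≤ ‖a‖ / 4 := by
            rw [dist_eq_norm] at hw; exact le_of_lt hw
    have hcp : ‖a‖ / 4 ≤ c (tp/n) := by
      rw [hval tp, him_eq tp]
      have h1 := herr tp _ (hkey tp)
      have h2 : ‖a‖ * (1/2) ≤ ‖a‖ * Real.sin (tp + a.arg) :=
        mul_le_mul_of_nonneg_left hsp (le_of_lt habs)
      have := abs_le.mp h1
      linarith
    have hcm : c (tm/n) ≤ -(‖a‖ / 4) := by
      rw [hval tm, him_eq tm]
      have h1 := herr tm _ (hkey tm)
      have h2 : ‖a‖ * Real.sin (tm + a.arg) ≤ ‖a‖ * (-(1/2)) :=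
        mul_le_mul_of_nonneg_left hsm (le_of_lt habs)
      have := abs_le.mp h1
      linarith
    -- IVT
    have h0mem : (0:ℝ) ∈ Set.uIcc (c (tp/n)) (c (tm/n)) := by
      rw [Set.mem_uIcc]
      right
      constructor
      · linarith
      · linarith
    obtain ⟨θ0, hθ0mem, hcθ0⟩ := intermediate_value_uIcc hccont h0mem
    -- θ0 ∈ (0, π)
    have hnR : (2:ℝ) ≤ n := by exact_mod_cast hn2
    have hnpos : (0:ℝ) < n := by linarith
    have hIoo : ∀ t : ℝ, t ∈ Set.Ioo (0:ℝ) (2*π) → t/n ∈ Set.Ioo (0:ℝ) π := by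
      intro t ht
      constructor
      · exact div_pos ht.1 hnpos
      · rw [div_lt_iff₀ hnpos]
        nlinarith [ht.2, Real.pi_pos]
    have hθ0 : θ0 ∈ Set.Ioo (0:ℝ) π := by
      have hp := hIoo tp htp
      have hm := hIoo tm htm
      rcases Set.mem_uIcc.mp hθ0mem with ⟨h1, h2⟩ | ⟨h1, h2⟩
      · exact ⟨lt_of_lt_of_le hp.1 h1, lt_of_le_of_lt h2 hm.2⟩
      · exact ⟨lt_of_lt_of_le hm.1 h1, lt_of_le_of_lt h2 hp.2⟩
    -- the contradiction point
    set s0 : ℂ := (r:ℂ) * Complex.exp (θ0 * Complex.I) with hs0def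
    have hs0im : s0.im = r * Real.sin θ0 := by
      rw [hs0def, Complex.mul_im]
      simp [Complex.exp_ofReal_mul_I_im, Complex.exp_ofReal_mul_I_re]
    have hs0impos : 0 < s0.im := by
      rw [hs0im]
      exact mul_pos hrpos (Real.sin_pos_of_pos_of_lt_pi hθ0.1 hθ0.2)
    have hgs0 : g s0 = s0 ^ n • u s0 := (hball (hcirc θ0)).1
    have hgim : (g s0).im = 0 := by
      rw [hgs0, smul_eq_mul, hs0def, mul_pow, ← Complex.ofReal_pow, mul_assoc, Complex.mul_im]
      simp only [Complex.ofReal_re, Complex.ofReal_im, zero_mul, add_zero]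
      have hc0 : (Complex.exp ((θ0:ℂ) * Complex.I) ^ n *
          u ((r:ℂ) * Complex.exp ((θ0:ℂ) * Complex.I))).im = 0 := hcθ0
      rw [hc0, mul_zero]
    have := (hball (hcirc θ0)).2.2.2 hgim
    rw [this] at hs0impos
    exact lt_irrefl 0 hs0impos


lemma aux_clm_apply (L : (ℂ × ℂ) →L[ℂ] ℂ) (p : ℂ × ℂ) :
    L p = p.1 * L (1, 0) + p.2 * L (0, 1) := by
  have hp : p = p.1 • ((1:ℂ), (0:ℂ)) + p.2 • ((0:ℂ), (1:ℂ)) := by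
    simp [Prod.ext_iff]
  conv_lhs => rw [hp]
  rw [map_add, map_smul, map_smul, smul_eq_mul, smul_eq_mul]

lemma aux_equiv (L : (ℂ × ℂ) →L[ℂ] ℂ) (ha : L (1, 0) ≠ 0) :
    ∃ E : (ℂ × ℂ) ≃L[ℂ] (ℂ × ℂ),
      (E : (ℂ × ℂ) →L[ℂ] (ℂ × ℂ)) = L.prod (ContinuousLinearMap.snd ℂ ℂ ℂ) := by
  set a := L (1, 0) with hadef
  set b := L (0, 1) with hbdef
  set f2 : (ℂ × ℂ) →L[ℂ] (ℂ × ℂ) :=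
    (a⁻¹ • (ContinuousLinearMap.fst ℂ ℂ ℂ - b • ContinuousLinearMap.snd ℂ ℂ ℂ)).prod
      (ContinuousLinearMap.snd ℂ ℂ ℂ) with hf2def
  have h1 : Function.LeftInverse f2 (L.prod (ContinuousLinearMap.snd ℂ ℂ ℂ)) := by
    intro p
    obtain ⟨p1, p2⟩ := p
    have hLp := aux_clm_apply L (p1, p2)
    simp only [hf2def, ContinuousLinearMap.prod_apply, ContinuousLinearMap.smul_apply,
      ContinuousLinearMap.sub_apply, ContinuousLinearMap.coe_fst', ContinuousLinearMap.coe_snd',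
      smul_eq_mul, Prod.mk.injEq]
    constructor
    · have hgoal : a⁻¹ * (p1 * a + p2 * b - b * p2) = p1 := by
        field_simp
        ring
      rw [hLp]; exact hgoal
    · trivial
  have h2 : Function.RightInverse f2 (L.prod (ContinuousLinearMap.snd ℂ ℂ ℂ)) := by
    intro p
    obtain ⟨p1, p2⟩ := p
    have hLp := aux_clm_apply L (a⁻¹ * (p1 - b * p2), p2)
    simp only [hf2def, ContinuousLinearMap.prod_apply, ContinuousLinearMap.smul_apply,
      ContinuousLinearMap.sub_apply, ContinuousLinearMap.coe_fst', ContinuousLinearMap.coe_snd',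
      smul_eq_mul, Prod.mk.injEq]
    constructor
    · have hgoal : a⁻¹ * (p1 - b * p2) * a + p2 * b = p1 := by
        field_simp
        ring
      rw [hLp]; exact hgoal
    · trivial
  exact ⟨ContinuousLinearEquiv.equivOfInverse _ f2 h1 h2, rfl⟩

/-- There is no function H̃ : ℂ² → ℂ analytic near (0,0) with H̃(0,0)=0,
∂H̃/∂s(0,0)=0, ∂H̃/∂θ(0,0)≠0, such that for all (θ,s) near (0,0) with θ real and
H̃(θ,s)=0 one has s real. -/
theorem no_toral_with_vanishing_s_derivative (H : ℂ → ℂ → ℂ)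
    (hH : AnalyticAt ℂ (fun p : ℂ × ℂ => H p.1 p.2) (0, 0))
    (h00 : H 0 0 = 0)
    (hs : deriv (fun s => H 0 s) 0 = 0)
    (hθ : deriv (fun θ => H θ 0) 0 ≠ 0)
    (hreal : ∀ᶠ p : ℂ × ℂ in nhds (0, 0), p.1.im = 0 → H p.1 p.2 = 0 → p.2.im = 0) :
    False := by
  set Huc : ℂ × ℂ → ℂ := fun p => H p.1 p.2 with hHuc
  obtain ⟨L, hL⟩ : ∃ L : (ℂ × ℂ) →L[ℂ] ℂ, HasStrictFDerivAt Huc L (0, 0) := by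
    obtain ⟨pser, hpser⟩ := hH
    exact ⟨_, hpser.hasStrictFDerivAt⟩
  -- partial derivatives
  have hderθ : HasDerivAt (fun θ : ℂ => H θ 0) (L (1, 0)) 0 := by
    have h1 : HasDerivAt (fun θ : ℂ => ((θ, (0:ℂ)) : ℂ × ℂ)) ((1:ℂ), (0:ℂ)) 0 :=
      (hasDerivAt_id 0).prodMk (hasDerivAt_const 0 0)
    have h2 := HasFDerivAt.comp_hasDerivAt (x := (0:ℂ))
      (f := fun θ : ℂ => ((θ, (0:ℂ)) : ℂ × ℂ)) hL.hasFDerivAt h1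
    simpa [Function.comp_def, hHuc] using h2
  have hders : HasDerivAt (fun s : ℂ => H 0 s) (L (0, 1)) 0 := by
    have h1 : HasDerivAt (fun s : ℂ => (((0:ℂ), s) : ℂ × ℂ)) ((0:ℂ), (1:ℂ)) 0 :=
      (hasDerivAt_const 0 0).prodMk (hasDerivAt_id 0)
    have h2 := HasFDerivAt.comp_hasDerivAt (x := (0:ℂ))
      (f := fun s : ℂ => (((0:ℂ), s) : ℂ × ℂ)) hL.hasFDerivAt h1
    simpa [Function.comp_def, hHuc] using h2
  have hθne : L (1, 0) ≠ 0 := by rw [← hderθ.deriv]; exact hθ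
  have hsz : L (0, 1) = 0 := by rw [← hders.deriv]; exact hs
  -- the local homeomorphism
  obtain ⟨E, hE⟩ := aux_equiv L hθne
  set F : ℂ × ℂ → ℂ × ℂ := fun p => (Huc p, p.2) with hFdef
  have hF : HasStrictFDerivAt F (E : (ℂ × ℂ) →L[ℂ] (ℂ × ℂ)) (0, 0) := by
    rw [hE]
    exact hL.prodMk ((ContinuousLinearMap.snd ℂ ℂ ℂ).hasStrictFDerivAt)
  set Ψ := hF.toOpenPartialHomeomorph F with hΨdef
  have hcoe : (Ψ : ℂ × ℂ → ℂ × ℂ) = F := hF.toOpenPartialHomeomorph_coe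
  have hsrc : ((0, 0) : ℂ × ℂ) ∈ Ψ.source := hF.mem_toOpenPartialHomeomorph_source
  have hF00 : F (0, 0) = (0, 0) := by
    rw [hFdef]; simp [hHuc, h00]
  have hΨ00 : Ψ (0, 0) = (0, 0) := by rw [show Ψ ((0,0) : ℂ × ℂ) = F (0,0) from congrFun hcoe _, hF00]
  have htgt : ((0, 0) : ℂ × ℂ) ∈ Ψ.target := by
    have := Ψ.map_source hsrc
    rwa [hΨ00] at this
  have hsymm00 : Ψ.symm (0, 0) = (0, 0) := by
    have h := Ψ.left_inv hsrc
    rwa [hΨ00] at h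
  set g : ℂ → ℂ := fun s => (Ψ.symm (0, s)).1 with hgdef
  have hg0 : g 0 = 0 := by
    have h : Ψ.symm ((0:ℂ), (0:ℂ)) = ((0:ℂ), (0:ℂ)) := hsymm00
    show (Ψ.symm ((0:ℂ), (0:ℂ))).1 = 0
    rw [h]
  have htends : Filter.Tendsto (fun s : ℂ => (((0:ℂ), s) : ℂ × ℂ)) (nhds 0)
      (nhds ((0 : ℂ), (0 : ℂ))) := tendsto_const_nhds.prodMk_nhds tendsto_id
  have hmemtgt : ∀ᶠ s : ℂ in nhds 0, (((0:ℂ), s) : ℂ × ℂ) ∈ Ψ.target :=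
    htends.eventually (Ψ.open_target.eventually_mem htgt)
  have hright : ∀ s : ℂ, (((0:ℂ), s) : ℂ × ℂ) ∈ Ψ.target → F (Ψ.symm (0, s)) = ((0:ℂ), s) := by
    intro s hst
    have h := Ψ.right_inv hst
    rwa [show Ψ (Ψ.symm ((0:ℂ), s)) = F (Ψ.symm ((0:ℂ), s)) from congrFun hcoe _] at h
  have hsnd_eq : ∀ s : ℂ, (((0:ℂ), s) : ℂ × ℂ) ∈ Ψ.target → (Ψ.symm ((0:ℂ), s)).2 = s :=
    fun s hst => congrArg Prod.snd (hright s hst)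
  have hHzero : ∀ s : ℂ, (((0:ℂ), s) : ℂ × ℂ) ∈ Ψ.target → H (g s) s = 0 := by
    intro s hst
    have h1 : H (Ψ.symm ((0:ℂ), s)).1 (Ψ.symm ((0:ℂ), s)).2 = 0 :=
      congrArg Prod.fst (hright s hst)
    rw [hsnd_eq s hst] at h1
    exact h1
  -- analyticity of g near 0
  have hana : ∀ᶠ p : ℂ × ℂ in nhds ((0, 0) : ℂ × ℂ), AnalyticAt ℂ Huc p :=
    hH.eventually_analyticAt
  have hfd00 : fderiv ℂ Huc (0, 0) = L := hL.hasFDerivAt.fderiv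
  have hfdcont : ContinuousAt (fun p : ℂ × ℂ => fderiv ℂ Huc p (1, 0)) (0, 0) := by
    exact (ContinuousLinearMap.apply ℂ ℂ ((1:ℂ), (0:ℂ))).continuous.continuousAt.comp
      hH.fderiv.continuousAt
  have hθnear : ∀ᶠ p : ℂ × ℂ in nhds ((0, 0) : ℂ × ℂ), fderiv ℂ Huc p (1, 0) ≠ 0 :=
    hfdcont.eventually_ne (by rw [hfd00]; exact hθne)
  obtain ⟨V, hVsub, hVopen, hV0⟩ := mem_nhds_iff.mp (hana.and hθnear)
  set W := Ψ.target ∩ Ψ.symm ⁻¹' V with hWdef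
  have hWopen : IsOpen W := Ψ.continuousOn_symm.isOpen_inter_preimage Ψ.open_target hVopen
  have hW0 : ((0, 0) : ℂ × ℂ) ∈ W := ⟨htgt, by rw [Set.mem_preimage, hsymm00]; exact hV0⟩
  have hdiffsymm : ∀ q ∈ W, DifferentiableAt ℂ Ψ.symm q := by
    intro q hq
    obtain ⟨hqt, hqV⟩ := hq
    obtain ⟨hqan, hqθ⟩ := hVsub hqV
    obtain ⟨Eq, hEq⟩ := aux_equiv (fderiv ℂ Huc (Ψ.symm q)) hqθ
    have hFq : HasFDerivAt F (Eq : (ℂ × ℂ) →L[ℂ] (ℂ × ℂ)) (Ψ.symm q) := by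
      rw [hEq]
      exact (hqan.differentiableAt.hasFDerivAt).prodMk
        ((ContinuousLinearMap.snd ℂ ℂ ℂ).hasFDerivAt)
    have hFq' : HasFDerivAt (↑Ψ) (Eq : (ℂ × ℂ) →L[ℂ] (ℂ × ℂ)) (Ψ.symm q) := by
      rw [hcoe]; exact hFq
    exact (Ψ.hasFDerivAt_symm hqt hFq').differentiableAt
  have hJcont : Continuous (fun s : ℂ => (((0:ℂ), s) : ℂ × ℂ)) :=
    continuous_const.prodMk continuous_id
  have hWopen' : IsOpen {s : ℂ | (((0:ℂ), s) : ℂ × ℂ) ∈ W} := hWopen.preimage hJcont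
  have hW0' : (0:ℂ) ∈ {s : ℂ | (((0:ℂ), s) : ℂ × ℂ) ∈ W} := hW0
  have hgdiff : DifferentiableOn ℂ g {s : ℂ | (((0:ℂ), s) : ℂ × ℂ) ∈ W} := by
    intro s hsW
    apply DifferentiableAt.differentiableWithinAt
    have h1 : DifferentiableAt ℂ Ψ.symm ((0:ℂ), s) := hdiffsymm _ hsW
    have h2 : DifferentiableAt ℂ (fun s : ℂ => (((0:ℂ), s) : ℂ × ℂ)) s :=
      (differentiableAt_const _).prodMk differentiableAt_id
    exact (h1.comp s h2).fst
  have hgana : AnalyticAt ℂ g 0 := hgdiff.analyticAt (hWopen'.mem_nhds hW0')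
  -- derivative of g at 0 is 0
  have hgd : HasDerivAt g (deriv g 0) 0 := hgana.differentiableAt.hasDerivAt
  have hcurve : HasDerivAt (fun s : ℂ => ((g s, s) : ℂ × ℂ)) ((deriv g 0, (1:ℂ))) 0 :=
    hgd.prodMk (hasDerivAt_id 0)
  have hL' : HasFDerivAt Huc L (g 0, 0) := by rw [hg0]; exact hL.hasFDerivAt
  have hφ : HasDerivAt (fun s : ℂ => Huc (g s, s)) (L (deriv g 0, 1)) 0 := by
    have h2 := HasFDerivAt.comp_hasDerivAt (x := (0:ℂ))
      (f := fun s : ℂ => ((g s, s) : ℂ × ℂ)) hL' hcurve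
    simpa [Function.comp_def] using h2
  have hφ0 : (fun s : ℂ => Huc (g s, s)) =ᶠ[nhds (0:ℂ)] (fun _ => (0:ℂ)) := by
    filter_upwards [hmemtgt] with s hst
    show Huc (g s, s) = 0
    exact hHzero s hst
  have hderφ : L (deriv g 0, 1) = 0 := by
    rw [← hφ.deriv, Filter.EventuallyEq.deriv_eq hφ0, deriv_const]
  have hdg : deriv g 0 = 0 := by
    have hexp := aux_clm_apply L (deriv g 0, 1)
    rw [hderφ, hsz, mul_zero, add_zero] at hexp
    rcases mul_eq_zero.mp hexp.symm with h | h
    · exact h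
    · exact absurd h hθne
  -- the reality condition for g
  have hgcont : ContinuousAt g 0 := hgana.continuousAt
  have htend2 : Filter.Tendsto (fun s : ℂ => ((g s, s) : ℂ × ℂ)) (nhds 0)
      (nhds ((0 : ℂ), (0 : ℂ))) := by
    have h := hgcont.tendsto
    rw [hg0] at h
    exact h.prodMk_nhds tendsto_id
  have hev := htend2.eventually hreal
  have hgr : ∀ᶠ s in nhds (0:ℂ), (g s).im = 0 → s.im = 0 := by
    filter_upwards [hev, hmemtgt] with s h1 h2 h3
    exact h1 h3 (hHzero s h2)
  exact aux_core g hgana hg0 hdg hgr
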